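/- Let k be a field, A = k[x]/(x^2) graded with deg(x) = 1, and H = k[X, X^{-1}]. For a ∈ k, the element (1 - ax) ⊗ 1 + ax ⊗ X is a grouplike element of the coring A ⊗ k[X,X^{-1}], equal to d(1 + ax) where 1 + ax is a unit of A; for a ≠ 0 it is not of the form Σ_i e_i ⊗ X^{d_i} for orthogonal idempotents e_i summing to 1. -/

import Mathlib

open TensorProduct LaurentPolynomial

universe u

namespace GradedGrouplike

variable {k : Type u} [CommRing k]

/-- The comultiplication of the Hopf algebra `H = k[X, X⁻¹] = k ℤ`, `Δ(Xⁿ) = Xⁿ ⊗ Xⁿ`. -/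
noncomputable def comulL :
    LaurentPolynomial k →ₗ[k] LaurentPolynomial k ⊗[k] LaurentPolynomial k :=
  Finsupp.lsum k (fun n : ℤ =>
    LinearMap.toSpanSingleton k _ ((T n : LaurentPolynomial k) ⊗ₜ[k] (T n : LaurentPolynomial k)))
    ∘ₗ (AddMonoidAlgebra.coeffLinearEquiv k).toLinearMap

/-- The counit of `k[X, X⁻¹]`, `ε(Xⁿ) = 1`. -/
noncomputable def counitL : LaurentPolynomial k →ₗ[k] k :=
  Finsupp.lsum k (fun _ : ℤ => LinearMap.toSpanSingleton k k 1)
    ∘ₗ (AddMonoidAlgebra.coeffLinearEquiv k).toLinearMap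

variable {A : Type u} [CommRing A] [Algebra k A]

/-- `x ∈ A ⊗ k[X,X⁻¹]` is a grouplike element of the coring `A ⊗ k[X,X⁻¹]` associated to
the coaction `ρ` (written via the identification
`(A ⊗ H) ⊗_A (A ⊗ H) ≅ A ⊗ H ⊗ H`, cf. the Harrison 1-cocycle condition). -/
noncomputable def IsGrouplikeL (ρ : A →ₗ[k] A ⊗[k] LaurentPolynomial k)
    (x : A ⊗[k] LaurentPolynomial k) : Prop :=
  (TensorProduct.assoc k A (LaurentPolynomial k) (LaurentPolynomial k)).symm
      ((LinearMap.lTensor A comulL) x)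
    = (LinearMap.rTensor (LaurentPolynomial k) (LinearMap.mulLeft k x))
        ((LinearMap.rTensor (LaurentPolynomial k) ρ) x) ∧
  (TensorProduct.rid k A) ((LinearMap.lTensor A counitL) x) = 1

end GradedGrouplike

namespace GradedGrouplike

variable {k : Type u} [Field k]

/-- The coaction `k[x]/(x²) → k[x]/(x²) ⊗ k[X,X⁻¹]` of the grading with `deg x = 1`:
`a + bx ↦ a ⊗ 1 + bx ⊗ X`. -/
noncomputable def dualNumberCoaction :
    DualNumber k →ₗ[k] DualNumber k ⊗[k] LaurentPolynomial k where
  toFun := fun z =>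
    (TrivSqZeroExt.inl z.fst : DualNumber k) ⊗ₜ[k] (T 0 : LaurentPolynomial k)
      + (z.snd • (DualNumber.eps : DualNumber k)) ⊗ₜ[k] (T 1 : LaurentPolynomial k)
  map_add' := fun z w => by
    simp only [TrivSqZeroExt.fst_add, TrivSqZeroExt.snd_add, TrivSqZeroExt.inl_add,
      add_smul, TensorProduct.add_tmul]
    abel
  map_smul' := fun t z => by
    simp only [TrivSqZeroExt.fst_smul, TrivSqZeroExt.snd_smul, TrivSqZeroExt.inl_smul,
      RingHom.id_apply, smul_add, TensorProduct.smul_tmul', smul_assoc]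

end GradedGrouplike


namespace GradedGrouplike

variable {k : Type u} [CommRing k]

lemma comulL_T (n : ℤ) :
    comulL (T n : LaurentPolynomial k) = (T n : LaurentPolynomial k) ⊗ₜ[k] T n := by
  have : AddMonoidAlgebra.coeffLinearEquiv k (T n : LaurentPolynomial k) = Finsupp.single n (1 : k) := rfl
  erw [comulL, LinearMap.comp_apply, LinearEquiv.coe_coe, this, Finsupp.lsum_single, LinearMap.toSpanSingleton_apply, one_smul]

lemma counitL_T (n : ℤ) : counitL (T n : LaurentPolynomial k) = 1 := by
  have : AddMonoidAlgebra.coeffLinearEquiv k (T n : LaurentPolynomial k) = Finsupp.single n (1 : k) := rfl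
  erw [counitL, LinearMap.comp_apply, LinearEquiv.coe_coe, this, Finsupp.lsum_single, LinearMap.toSpanSingleton_apply, one_smul]

end GradedGrouplike

section Aux
variable {k : Type u} [CommRing k]

lemma smul_eps_mul_smul_eps (a b : k) :
    (a • DualNumber.eps : DualNumber k) * (b • DualNumber.eps) = 0 := by
  rw [smul_mul_smul_comm, DualNumber.eps_mul_eps, smul_zero]

lemma idem_snd_eq_zero {z : DualNumber k} (h : IsIdempotentElem z) : z.snd = 0 := by
  have h1 := congrArg TrivSqZeroExt.fst h
  have h2 := congrArg TrivSqZeroExt.snd h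
  simp only [TrivSqZeroExt.fst_mul, TrivSqZeroExt.snd_mul, smul_eq_mul,
    MulOpposite.smul_eq_mul_unop, MulOpposite.unop_op] at h1 h2
  linear_combination (2*z.fst - 1)*h2 - 4*z.snd*h1

end Aux

set_option maxHeartbeats 1000000 in
set_option synthInstance.maxHeartbeats 200000 in
open GradedGrouplike TrivSqZeroExt in

/-- for `A = k[x]/(x²)` graded by `deg x = 1` and `H = k[X, X⁻¹]`, and
`a ∈ k`, the element `(1 - ax) ⊗ 1 + ax ⊗ X` is a grouplike element of the coring
`A ⊗ k[X,X⁻¹]`, equal to `d(1 + ax)` for the unit `1 + ax` of `A`; but for `a ≠ 0` it is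
not of the form `Σᵢ eᵢ ⊗ X^{dᵢ}` with `eᵢ` orthogonal idempotents summing to `1`. -/
theorem nilpotent_counterexample
    {k : Type u} [Field k] (a : k) :
    IsUnit ((1 : DualNumber k) + a • DualNumber.eps) ∧
    IsGrouplikeL dualNumberCoaction
      (((1 : DualNumber k) - a • DualNumber.eps) ⊗ₜ[k] (T 0 : LaurentPolynomial k)
        + (a • DualNumber.eps) ⊗ₜ[k] (T 1 : LaurentPolynomial k)) ∧
    ((((1 : DualNumber k) - a • DualNumber.eps) ⊗ₜ[k] (1 : LaurentPolynomial k))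
        * dualNumberCoaction ((1 : DualNumber k) + a • DualNumber.eps)
      = ((1 : DualNumber k) - a • DualNumber.eps) ⊗ₜ[k] (T 0 : LaurentPolynomial k)
        + (a • DualNumber.eps) ⊗ₜ[k] (T 1 : LaurentPolynomial k)) ∧
    (a ≠ 0 →
      ¬ ∃ (n : ℕ) (e : Fin n → DualNumber k) (d : Fin n → ℤ),
        (∀ i, IsIdempotentElem (e i)) ∧
        (∀ i j, i ≠ j → e i * e j = 0) ∧
        (∑ i, e i = 1) ∧
        ((1 : DualNumber k) - a • DualNumber.eps) ⊗ₜ[k] (T 0 : LaurentPolynomial k)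
            + (a • DualNumber.eps) ⊗ₜ[k] (T 1 : LaurentPolynomial k)
          = ∑ i, (e i) ⊗ₜ[k] (T (d i) : LaurentPolynomial k)) := by
  set v : DualNumber k := a • DualNumber.eps with hv
  have hvv : v * v = 0 := smul_eps_mul_smul_eps a a
  have hmul : ((1 : DualNumber k) - v) * (1 + v) = 1 := by ring_nf; rw [pow_two, hvv, sub_zero]
  have hρu : dualNumberCoaction ((1 : DualNumber k) - v)
      = (1 : DualNumber k) ⊗ₜ[k] (T 0 : LaurentPolynomial k) + (-v) ⊗ₜ[k] T 1 := by
    show (TrivSqZeroExt.inl ((1 : DualNumber k) - v).fst : DualNumber k) ⊗ₜ[k] _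
        + (((1 : DualNumber k) - v).snd • (DualNumber.eps : DualNumber k)) ⊗ₜ[k] _ = _
    simp [hv, TrivSqZeroExt.snd_sub, TrivSqZeroExt.fst_sub, neg_smul]
  have hρv : dualNumberCoaction ((1 : DualNumber k) + v)
      = (1 : DualNumber k) ⊗ₜ[k] (T 0 : LaurentPolynomial k) + v ⊗ₜ[k] T 1 := by
    show (TrivSqZeroExt.inl ((1 : DualNumber k) + v).fst : DualNumber k) ⊗ₜ[k] _
        + (((1 : DualNumber k) + v).snd • (DualNumber.eps : DualNumber k)) ⊗ₜ[k] _ = _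
    simp [hv]
  have hρε : dualNumberCoaction v = v ⊗ₜ[k] (T 1 : LaurentPolynomial k) := by
    show (TrivSqZeroExt.inl v.fst : DualNumber k) ⊗ₜ[k] _
        + (v.snd • (DualNumber.eps : DualNumber k)) ⊗ₜ[k] _ = _
    simp [hv]
  have p1 : ((1 : DualNumber k) - v) * (-v) = -v := by linear_combination hvv
  have p2 : v * (-v) = 0 := by linear_combination -hvv
  have p3 : ((1 : DualNumber k) - v) * v = v := by linear_combination -hvv
  refine ⟨IsUnit.of_mul_eq_one _ (by rw [mul_comm]; exact hmul), ?_, ?_, ?_⟩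
  · constructor
    · simp only [map_add, LinearMap.lTensor_tmul, comulL_T, LinearMap.rTensor_tmul,
        TensorProduct.assoc_symm_tmul, hρu, hρε]
      simp only [LinearMap.mulLeft_apply, mul_add, add_mul,
        Algebra.TensorProduct.tmul_mul_tmul, one_mul, mul_one, ← T_add, p1, p2, p3, hvv,
        TensorProduct.zero_tmul, TensorProduct.add_tmul, add_zero]
      norm_num
      simp only [neg_smul, one_smul, TensorProduct.neg_tmul]
      abel
    · simp only [map_add, LinearMap.lTensor_tmul, counitL_T, TensorProduct.rid_tmul, one_smul]
      simp [hv]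
  · have hd := (LinearMap.mulLeft k (((1 : DualNumber k) - v) ⊗ₜ[k] (1 : LaurentPolynomial k))).map_add
      ((1 : DualNumber k) ⊗ₜ[k] (T 0 : LaurentPolynomial k)) (v ⊗ₜ[k] T 1)
    simp only [LinearMap.mulLeft_apply] at hd
    rw [hρv, hd]
    simp only [Algebra.TensorProduct.tmul_mul_tmul, mul_one, one_mul, p3]
  · rintro ha ⟨n, e, d, hid, -, -, heq⟩
    classical
    let φ : DualNumber k ⊗[k] LaurentPolynomial k →ₗ[k] k :=
      (TensorProduct.lid k k).toLinearMap ∘ₗ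
        TensorProduct.map (TrivSqZeroExt.sndHom k k) (Finsupp.lapply (1 : ℤ) ∘ₗ (AddMonoidAlgebra.coeffLinearEquiv k).toLinearMap)
    have hφ : ∀ (z : DualNumber k) (m : ℤ), φ (z ⊗ₜ[k] (T m : LaurentPolynomial k))
        = z.snd * (if m = 1 then 1 else 0) := by
      intro z m
      show (TrivSqZeroExt.sndHom k k z) • (Finsupp.lapply (R := k) (1:ℤ) (AddMonoidAlgebra.coeffLinearEquiv k (T m : LaurentPolynomial k) : ℤ →₀ k)) = _
      rw [Finsupp.lapply_apply, show AddMonoidAlgebra.coeffLinearEquiv k (T m : LaurentPolynomial k)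
        = Finsupp.single m (1 : k) from rfl, Finsupp.single_apply]
      simp [smul_eq_mul]
    have := congrArg φ heq
    rw [map_add, map_sum, hφ, hφ] at this
    simp only [hφ, idem_snd_eq_zero (hid _), zero_mul, Finset.sum_const_zero] at this
    simp [hv, TrivSqZeroExt.snd_smul] at this
    exact ha this
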